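/- For all k ∈ ℕ and all complex ξ₁, ξ₂, ξ₃, p, q, η with Re(ξ₃) > Re(ξ₂) > 0, Re(p) > 0, Re(q) > 0 and Re(η) > -1, the k-th derivative with respect to x of the extended Gauss hypergeometric function satisfies, for |x| < 1, d^k/dx^k [F_η^{p,q}(ξ₁,ξ₂;ξ₃;x)] = ((ξ₁)_k (ξ₂)_k / (ξ₃)_k) · F_η^{p,q}(ξ₁+k, ξ₂+k; ξ₃+k; x), where (a)_k denotes the Pochhammer symbol. -/

import Mathlib

open MeasureTheory Complex

/-- The Bessel–Struve kernel function, defined by its power series. -/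
noncomputable def besselStruve (η t : ℂ) : ℂ :=
  (Complex.Gamma (η + 1) / (Real.sqrt Real.pi : ℂ)) *
    ∑' m : ℕ, t ^ m * Complex.Gamma (((m : ℂ) + 1) / 2) /
      ((m.factorial : ℂ) * Complex.Gamma ((m : ℂ) / 2 + η + 1))

/-- The extended beta function `B_η^{p,q}(ξ₁, ξ₂)`. -/
noncomputable def extBeta (η p q ξ₁ ξ₂ : ℂ) : ℂ :=
  ∫ y in (0:ℝ)..1, (y : ℂ) ^ (ξ₁ - 1) * ((1 : ℂ) - (y : ℂ)) ^ (ξ₂ - 1) *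
    besselStruve η (-p / (y : ℂ)) * besselStruve η (-q / (1 - (y : ℂ)))

/-- The Pochhammer symbol `(a)_l = Γ(a + l)/Γ(a)`. -/
noncomputable def poch (a : ℂ) (l : ℕ) : ℂ := Complex.Gamma (a + l) / Complex.Gamma a

/-- The extended Gauss hypergeometric function `F_η^{p,q}(ξ₁, ξ₂; ξ₃; x)`. -/
noncomputable def extF (η p q ξ₁ ξ₂ ξ₃ x : ℂ) : ℂ :=
  ∑' l : ℕ, poch ξ₁ l * extBeta η p q (ξ₂ + l) (ξ₃ - ξ₂) * x ^ l /
    (Complex.betaIntegral ξ₂ (ξ₃ - ξ₂) * (l.factorial : ℂ))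

/-- The extended confluent hypergeometric function `Φ_η^{p,q}(ξ₂; ξ₃; x)`. -/
noncomputable def extPhi (η p q ξ₂ ξ₃ x : ℂ) : ℂ :=
  ∑' l : ℕ, extBeta η p q (ξ₂ + l) (ξ₃ - ξ₂) * x ^ l /
    (Complex.betaIntegral ξ₂ (ξ₃ - ξ₂) * (l.factorial : ℂ))

/-! ### Auxiliary lemmas -/

set_option maxHeartbeats 1600000

lemma bound_of_eventually {g : ℕ → ℝ} (hg0 : ∀ l, 0 ≤ g l) (l₀ : ℕ) (M₀ : ℝ)
    (hM₀ : 0 ≤ M₀) (key : ∀ l, l₀ ≤ l → g l ≤ M₀) : ∃ M : ℝ, 0 ≤ M ∧ ∀ l, g l ≤ M := by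
  refine ⟨M₀ + ∑ l ∈ Finset.range l₀, g l,
    add_nonneg hM₀ (Finset.sum_nonneg fun m _ => hg0 m), fun l => ?_⟩
  rcases lt_or_ge l l₀ with h | h
  · have h1 : g l ≤ ∑ m ∈ Finset.range l₀, g m :=
      Finset.single_le_sum (fun m _ => hg0 m) (Finset.mem_range.mpr h)
    linarith
  · have h2 : (0:ℝ) ≤ ∑ m ∈ Finset.range l₀, g m := Finset.sum_nonneg fun m _ => hg0 m
    linarith [key l h]

lemma gamma_shift_ne {a : ℂ} (ha : Complex.Gamma a ≠ 0) (n : ℕ) :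
    Complex.Gamma (a + n) ≠ 0 := by
  intro h
  obtain ⟨m, hm⟩ := (Complex.Gamma_eq_zero_iff _).mp h
  exact ha ((Complex.Gamma_eq_zero_iff _).mpr ⟨m + n, by push_cast at hm ⊢; linear_combination hm⟩)

lemma shift_ne_zero {a : ℂ} (ha : Complex.Gamma a ≠ 0) (n : ℕ) : a + n ≠ 0 := by
  intro h
  exact ha ((Complex.Gamma_eq_zero_iff _).mpr ⟨n, by linear_combination h⟩)

lemma gamma_succ_ne {a : ℂ} (ha : Complex.Gamma a ≠ 0) : Complex.Gamma (a + 1) ≠ 0 := by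
  have := gamma_shift_ne ha 1
  simpa using this

lemma poch_ne_zero {a : ℂ} (ha : Complex.Gamma a ≠ 0) (n : ℕ) : poch a n ≠ 0 :=
  div_ne_zero (gamma_shift_ne ha n) ha

lemma poch_succ {a : ℂ} (ha : Complex.Gamma a ≠ 0) (n : ℕ) :
    poch a (n + 1) = (a + n) * poch a n := by
  unfold poch
  have h1 : a + ((n : ℂ) + 1) = (a + n) + 1 := by ring
  have h2 : (((n : ℕ) + 1 : ℕ) : ℂ) = (n : ℂ) + 1 := by push_cast; ring
  rw [h2, h1, Complex.Gamma_add_one _ (shift_ne_zero ha n), mul_div_assoc]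

lemma poch_one_mul (a : ℂ) (k : ℕ) : poch a 1 * poch (a + 1) k = poch a (k + 1) := by
  by_cases h : Complex.Gamma a = 0
  · simp [poch, h]
  · have h1 : Complex.Gamma (a + 1) ≠ 0 := gamma_succ_ne h
    unfold poch
    have e1 : a + ((1 : ℕ) : ℂ) = a + 1 := by push_cast; ring
    have e2 : a + ((k + 1 : ℕ) : ℂ) = a + 1 + k := by push_cast; ring
    rw [e1, e2]
    field_simp

lemma extF_eq_zero {η p q ξ₁ ξ₂ ξ₃ x : ℂ} (h : Complex.Gamma ξ₁ = 0) :
    extF η p q ξ₁ ξ₂ ξ₃ x = 0 := by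
  unfold extF
  simp [poch, h]

/-- Uniform bound for the extended beta values appearing as coefficients. -/
lemma extBeta_bound (η p q ξ₂ ξ₃ : ℂ) :
    ∃ M : ℝ, 0 ≤ M ∧ ∀ l : ℕ, ‖extBeta η p q (ξ₂ + l) (ξ₃ - ξ₂)‖ ≤ M := by
  set I : ℕ → ℝ → ℂ := fun l y =>
    (y : ℂ) ^ (ξ₂ + l - 1) * ((1 : ℂ) - (y : ℂ)) ^ (ξ₃ - ξ₂ - 1) *
      besselStruve η (-p / (y : ℂ)) * besselStruve η (-q / (1 - (y : ℂ))) with hI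
  have hval : ∀ l : ℕ, extBeta η p q (ξ₂ + l) (ξ₃ - ξ₂) = ∫ y in (0:ℝ)..1, I l y := fun l => rfl
  by_cases hin : ∃ l₀ : ℕ, IntervalIntegrable (I l₀) volume 0 1
  · obtain ⟨l₀, h₀⟩ := hin
    set M₀ : ℝ := |∫ y in (0:ℝ)..1, ‖I l₀ y‖| with hM₀
    have hM₀0 : 0 ≤ M₀ := abs_nonneg _
    have key : ∀ l : ℕ, l₀ ≤ l → ‖extBeta η p q (ξ₂ + l) (ξ₃ - ξ₂)‖ ≤ M₀ := by
      intro l hl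
      rw [hval]
      apply intervalIntegral.norm_integral_le_abs_of_norm_le _ h₀.norm
      rw [ae_restrict_iff' measurableSet_uIoc]
      filter_upwards with y hy
      rw [Set.uIoc_of_le (by norm_num : (0:ℝ) ≤ 1)] at hy
      obtain ⟨hy0, hy1⟩ := hy
      have hrest : ∀ m : ℕ, ‖I m y‖ =
          y ^ (ξ₂.re + m - 1) * (‖((1 : ℂ) - (y : ℂ)) ^ (ξ₃ - ξ₂ - 1)‖ *
            (‖besselStruve η (-p / (y : ℂ))‖ * ‖besselStruve η (-q / (1 - (y : ℂ)))‖)) := by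
        intro m
        rw [hI]
        simp only [norm_mul]
        rw [Complex.norm_cpow_eq_rpow_re_of_pos hy0]
        have : (ξ₂ + (m : ℂ) - 1).re = ξ₂.re + m - 1 := by simp
        rw [this]
        ring
      rw [hrest l, hrest l₀]
      apply mul_le_mul_of_nonneg_right _ (by positivity)
      have hcast : (l₀ : ℝ) ≤ (l : ℝ) := Nat.cast_le.mpr hl
      exact Real.rpow_le_rpow_of_exponent_ge hy0 hy1 (by linarith)
    exact bound_of_eventually (fun l => norm_nonneg _) l₀ M₀ hM₀0 key
  · push_neg at hin
    refine ⟨0, le_refl _, fun l => ?_⟩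
    rw [hval, intervalIntegral.integral_undef (hin l)]
    simp

/-- Ratio-test summability of the majorant series. -/
lemma summable_majorant {ξ₁ : ℂ} (hξ₁ : Complex.Gamma ξ₁ ≠ 0) (j : ℕ) {r : ℝ}
    (h0 : 0 ≤ r) (h1 : r < 1) :
    Summable (fun l : ℕ => ‖poch ξ₁ (l + j)‖ / (l.factorial : ℝ) * r ^ l) := by
  rcases eq_or_lt_of_le h0 with h | h
  · apply summable_of_ne_finset_zero (s := {0})
    intro l hl
    have : l ≠ 0 := by simpa using hl
    simp [← h, zero_pow this]
  · apply summable_of_ratio_test_tendsto_lt_one h1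
    · filter_upwards with l
      have hp : poch ξ₁ (l + j) ≠ 0 := poch_ne_zero hξ₁ _
      have hA : 0 < ‖poch ξ₁ (l + j)‖ := norm_pos_iff.mpr hp
      positivity
    · have heq : ∀ l : ℕ,
          ‖‖poch ξ₁ (l + 1 + j)‖ / ((l + 1).factorial : ℝ) * r ^ (l + 1)‖ /
            ‖‖poch ξ₁ (l + j)‖ / (l.factorial : ℝ) * r ^ l‖ =
          ‖ξ₁ + ((l + j : ℕ) : ℂ)‖ / ((l : ℝ) + 1) * r := by
        intro l
        have hp : poch ξ₁ (l + j) ≠ 0 := poch_ne_zero hξ₁ _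
        have hA : 0 < ‖poch ξ₁ (l + j)‖ := norm_pos_iff.mpr hp
        have hF : 0 < (l.factorial : ℝ) := by positivity
        have n1 : ‖‖poch ξ₁ (l + 1 + j)‖ / ((l + 1).factorial : ℝ) * r ^ (l + 1)‖ =
            ‖poch ξ₁ (l + 1 + j)‖ / ((l + 1).factorial : ℝ) * r ^ (l + 1) := by
          rw [Real.norm_eq_abs]; exact abs_of_nonneg (by positivity)
        have n2 : ‖‖poch ξ₁ (l + j)‖ / (l.factorial : ℝ) * r ^ l‖ =
            ‖poch ξ₁ (l + j)‖ / (l.factorial : ℝ) * r ^ l := by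
          rw [Real.norm_eq_abs]; exact abs_of_nonneg (by positivity)
        rw [n1, n2]
        have e : l + 1 + j = l + j + 1 := by omega
        rw [e, poch_succ hξ₁ (l + j), norm_mul]
        have hf : ((l + 1).factorial : ℝ) = ((l : ℝ) + 1) * (l.factorial : ℝ) := by
          rw [Nat.factorial_succ]; push_cast; ring
        rw [hf, pow_succ]
        have hl1 : (0:ℝ) < (l : ℝ) + 1 := by positivity
        have hd : ‖poch ξ₁ (l + j)‖ / (l.factorial : ℝ) * r ^ l ≠ 0 :=
          (by positivity : (0:ℝ) < ‖poch ξ₁ (l + j)‖ / (l.factorial : ℝ) * r ^ l).ne'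
        rw [div_eq_iff hd]
        field_simp
      apply Filter.Tendsto.congr' (Filter.Eventually.of_forall fun l => (heq l).symm)
      have base : Filter.Tendsto (fun l : ℕ => (ξ₁ + ((l + j : ℕ) : ℂ)) / ((l : ℂ) + 1))
          Filter.atTop (nhds 1) := by
        have e : ∀ l : ℕ, (ξ₁ + ((l + j : ℕ) : ℂ)) / ((l : ℂ) + 1) =
            1 + (ξ₁ + j - 1) / ((l : ℂ) + 1) := by
          intro l
          have hl : ((l : ℂ) + 1) ≠ 0 := by
            intro hcon
            have h' : ((l : ℂ) + 1) = ((l + 1 : ℕ) : ℂ) := by push_cast; ring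
            rw [h'] at hcon
            exact Nat.cast_ne_zero.mpr (Nat.succ_ne_zero l) hcon
          field_simp
          push_cast
          ring
        simp only [e]
        have h0 : Filter.Tendsto (fun l : ℕ => (ξ₁ + j - 1) / ((l : ℂ) + 1))
            Filter.atTop (nhds 0) := by
          rw [tendsto_zero_iff_norm_tendsto_zero]
          have hnn : ∀ l : ℕ, ‖(ξ₁ + (j:ℂ) - 1) / ((l : ℂ) + 1)‖ =
              ‖ξ₁ + (j:ℂ) - 1‖ / ((l + 1 : ℕ) : ℝ) := by
            intro l
            rw [norm_div]
            congr 1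
            have h' : ((l : ℂ) + 1) = ((l + 1 : ℕ) : ℂ) := by push_cast; ring
            rw [h', Complex.norm_natCast]
          simp only [hnn]
          exact (tendsto_const_div_atTop_nhds_zero_nat ‖ξ₁ + (j:ℂ) - 1‖).comp
            (Filter.tendsto_add_atTop_nat 1)
        have := Filter.Tendsto.const_add (1 : ℂ) h0
        simpa using this
      have hcomp := (continuous_norm.tendsto (1 : ℂ)).comp base
      rw [norm_one] at hcomp
      have hnorm : Filter.Tendsto (fun l : ℕ => ‖ξ₁ + ((l + j : ℕ) : ℂ)‖ / ((l : ℝ) + 1))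
          Filter.atTop (nhds 1) := by
        apply hcomp.congr
        intro l
        show ‖(ξ₁ + ((l + j : ℕ) : ℂ)) / ((l : ℂ) + 1)‖ = _
        rw [norm_div]
        congr 1
        have h' : ((l : ℂ) + 1) = ((l + 1 : ℕ) : ℂ) := by push_cast; ring
        rw [h', Complex.norm_natCast]
        push_cast; ring
      have := hnorm.mul_const r
      simpa using this

lemma iteratedDeriv_const_mul' (n : ℕ) (c : ℂ) (g : ℂ → ℂ) (x : ℂ) :
    iteratedDeriv n (fun y => c * g y) x = c * iteratedDeriv n g x := by
  induction n generalizing g x with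
  | zero => simp
  | succ n ih =>
    rw [iteratedDeriv_succ', iteratedDeriv_succ']
    have h : deriv (fun y => c * g y) = fun y => c * deriv g y :=
      funext fun y => deriv_const_mul_field c
    rw [h]
    exact ih (deriv g) x

lemma extF_hasSeries (η p q ξ₁ ξ₂ ξ₃ y : ℂ) :
    extF η p q ξ₁ ξ₂ ξ₃ y =
      ∑' l : ℕ, (poch ξ₁ l * extBeta η p q (ξ₂ + l) (ξ₃ - ξ₂) /
        (Complex.betaIntegral ξ₂ (ξ₃ - ξ₂) * (l.factorial : ℂ))) * y ^ l := by
  unfold extF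
  exact tsum_congr fun l => by ring

lemma extF_deriv (η p q ξ₁ ξ₂ ξ₃ : ℂ) (h1 : 0 < ξ₂.re) (h2 : ξ₂.re < ξ₃.re)
    (hξ₁ : Complex.Gamma ξ₁ ≠ 0) :
    ∀ x : ℂ, ‖x‖ < 1 →
      deriv (fun y => extF η p q ξ₁ ξ₂ ξ₃ y) x =
        (poch ξ₁ 1 * poch ξ₂ 1 / poch ξ₃ 1) *
          extF η p q (ξ₁ + 1) (ξ₂ + 1) (ξ₃ + 1) x := by
  intro x hx
  have hG2 : Complex.Gamma ξ₂ ≠ 0 := Complex.Gamma_ne_zero_of_re_pos h1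
  have hG3 : Complex.Gamma ξ₃ ≠ 0 := Complex.Gamma_ne_zero_of_re_pos (lt_trans h1 h2)
  have h32 : 0 < (ξ₃ - ξ₂).re := by rw [Complex.sub_re]; linarith
  have hG32 : Complex.Gamma (ξ₃ - ξ₂) ≠ 0 := Complex.Gamma_ne_zero_of_re_pos h32
  have hG2' : Complex.Gamma (ξ₂ + 1) ≠ 0 := gamma_succ_ne hG2
  have hG3' : Complex.Gamma (ξ₃ + 1) ≠ 0 := gamma_succ_ne hG3
  have hb : Complex.betaIntegral ξ₂ (ξ₃ - ξ₂) =
      Complex.Gamma ξ₂ * Complex.Gamma (ξ₃ - ξ₂) / Complex.Gamma ξ₃ := by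
    have h := Complex.Gamma_mul_Gamma_eq_betaIntegral h1 h32
    have e : ξ₂ + (ξ₃ - ξ₂) = ξ₃ := by ring
    rw [e] at h
    rw [eq_div_iff hG3]
    linear_combination -h
  have h1' : 0 < (ξ₂ + 1).re := by rw [Complex.add_re, Complex.one_re]; linarith
  have hb' : Complex.betaIntegral (ξ₂ + 1) (ξ₃ - ξ₂) =
      Complex.Gamma (ξ₂ + 1) * Complex.Gamma (ξ₃ - ξ₂) / Complex.Gamma (ξ₃ + 1) := by
    have h := Complex.Gamma_mul_Gamma_eq_betaIntegral h1' h32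
    have e : ξ₂ + 1 + (ξ₃ - ξ₂) = ξ₃ + 1 := by ring
    rw [e] at h
    rw [eq_div_iff hG3']
    linear_combination -h
  have hB : Complex.betaIntegral ξ₂ (ξ₃ - ξ₂) ≠ 0 := by
    rw [hb]; exact div_ne_zero (mul_ne_zero hG2 hG32) hG3
  have hB' : Complex.betaIntegral (ξ₂ + 1) (ξ₃ - ξ₂) ≠ 0 := by
    rw [hb']; exact div_ne_zero (mul_ne_zero hG2' hG32) hG3'
  set c : ℕ → ℂ := fun l => poch ξ₁ l * extBeta η p q (ξ₂ + l) (ξ₃ - ξ₂) /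
    (Complex.betaIntegral ξ₂ (ξ₃ - ξ₂) * (l.factorial : ℂ)) with hcdef
  obtain ⟨M, hM0, hM⟩ := extBeta_bound η p q ξ₂ ξ₃
  set K : ℝ := M / ‖Complex.betaIntegral ξ₂ (ξ₃ - ξ₂)‖ with hKdef
  have hK0 : 0 ≤ K := div_nonneg hM0 (norm_nonneg _)
  have hBpos : 0 < ‖Complex.betaIntegral ξ₂ (ξ₃ - ξ₂)‖ := norm_pos_iff.mpr hB
  have hc : ∀ l : ℕ, ‖c l‖ ≤ ‖poch ξ₁ l‖ / (l.factorial : ℝ) * K := by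
    intro l
    rw [hcdef]
    simp only [norm_div, norm_mul, Complex.norm_natCast]
    rw [hKdef, div_mul_div_comm]
    rw [div_le_div_iff₀ (by positivity) (by positivity)]
    have hfac : (0:ℝ) < (l.factorial : ℝ) := by positivity
    have hint := mul_le_mul_of_nonneg_left (hM l)
      (by positivity : (0:ℝ) ≤ ‖poch ξ₁ l‖ * ((l.factorial : ℝ) * ‖Complex.betaIntegral ξ₂ (ξ₃ - ξ₂)‖))
    nlinarith [hint]
  set r : ℝ := (‖x‖ + 1) / 2 with hrdef
  have hr1 : r < 1 := by rw [hrdef]; linarith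
  have hrx : ‖x‖ < r := by rw [hrdef]; linarith [norm_nonneg x]
  have hr0 : 0 < r := by rw [hrdef]; linarith [norm_nonneg x]
  set u : ℕ → ℝ := fun n => ‖c n‖ * n * r ^ (n - 1) with hudef
  have hu : Summable u := by
    rw [← summable_nat_add_iff 1]
    refine Summable.of_nonneg_of_le
      (f := fun n : ℕ => K * (‖poch ξ₁ (n + 1)‖ / (n.factorial : ℝ) * r ^ n))
      (fun n => by simp only [hudef]; positivity) (fun n => ?_)
      ((summable_majorant hξ₁ 1 hr0.le hr1).mul_left K)
    · simp only [hudef]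
      simp only [Nat.add_sub_cancel]
      have hcb := hc (n + 1)
      have hfac : ((n + 1).factorial : ℝ) = ((n : ℝ) + 1) * (n.factorial : ℝ) := by
        rw [Nat.factorial_succ]; push_cast; ring
      have hstep : ‖c (n + 1)‖ * ((n:ℝ) + 1) ≤ K * (‖poch ξ₁ (n + 1)‖ / (n.factorial : ℝ)) := by
        have := mul_le_mul_of_nonneg_right hcb (by positivity : (0:ℝ) ≤ (n:ℝ) + 1)
        calc ‖c (n + 1)‖ * ((n:ℝ) + 1)
            ≤ ‖poch ξ₁ (n + 1)‖ / ((n + 1).factorial : ℝ) * K * ((n:ℝ) + 1) := this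
          _ = K * (‖poch ξ₁ (n + 1)‖ / (n.factorial : ℝ)) := by
              rw [hfac]
              have hfn : (0:ℝ) < (n.factorial : ℝ) := by positivity
              have hn1 : (0:ℝ) < (n:ℝ) + 1 := by positivity
              field_simp
      have hcast : ((n + 1 : ℕ) : ℝ) = (n : ℝ) + 1 := by push_cast; ring
      rw [hcast]
      calc ‖c (n + 1)‖ * ((n:ℝ) + 1) * r ^ n
          ≤ K * (‖poch ξ₁ (n + 1)‖ / (n.factorial : ℝ)) * r ^ n :=
            mul_le_mul_of_nonneg_right hstep (by positivity)
        _ = K * (‖poch ξ₁ (n + 1)‖ / (n.factorial : ℝ) * r ^ n) := by ring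
  have hg : ∀ (n : ℕ) (y : ℂ), y ∈ Metric.ball (0:ℂ) r →
      HasDerivAt (fun z => c n * z ^ n) (c n * ((n : ℂ) * y ^ (n - 1))) y :=
    fun n y _ => (hasDerivAt_pow n y).const_mul (c n)
  have hg' : ∀ (n : ℕ) (y : ℂ), y ∈ Metric.ball (0:ℂ) r →
      ‖c n * ((n : ℂ) * y ^ (n - 1))‖ ≤ u n := by
    intro n y hy
    have hyr : ‖y‖ ≤ r := (mem_ball_zero_iff.mp hy).le
    rw [hudef]
    simp only [norm_mul, Complex.norm_natCast, norm_pow]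
    calc ‖c n‖ * ((n : ℝ) * ‖y‖ ^ (n - 1))
        ≤ ‖c n‖ * ((n : ℝ) * r ^ (n - 1)) := by
          apply mul_le_mul_of_nonneg_left _ (norm_nonneg _)
          exact mul_le_mul_of_nonneg_left (pow_le_pow_left₀ (norm_nonneg _) hyr _)
            (Nat.cast_nonneg n)
      _ = ‖c n‖ * n * r ^ (n - 1) := by ring
  have hg0 : Summable (fun n => c n * (0:ℂ) ^ n) := by
    apply summable_of_ne_finset_zero (s := {0})
    intro n hn
    have hn' : n ≠ 0 := by simpa using hn
    rw [zero_pow hn', mul_zero]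
  have hxball : x ∈ Metric.ball (0:ℂ) r := by
    rw [mem_ball_zero_iff]
    exact hrx
  have hD := hasDerivAt_tsum_of_isPreconnected hu Metric.isOpen_ball
    (convex_ball (0:ℂ) r).isPreconnected hg hg' (Metric.mem_ball_self hr0) hg0 hxball
  have hfun : (fun y => extF η p q ξ₁ ξ₂ ξ₃ y) = fun y => ∑' n : ℕ, c n * y ^ n := by
    funext y
    rw [extF_hasSeries]
  rw [hfun, hD.deriv]
  have hs' : Summable (fun n => c n * ((n : ℂ) * x ^ (n - 1))) :=
    Summable.of_norm_bounded hu (fun n => hg' n x hxball)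
  rw [Summable.tsum_eq_zero_add hs']
  simp only [Nat.cast_zero, zero_mul, mul_zero, zero_add, Nat.add_sub_cancel]
  rw [extF_hasSeries, ← tsum_mul_left]
  apply tsum_congr
  intro n
  have e34 : ξ₃ + 1 - (ξ₂ + 1) = ξ₃ - ξ₂ := by ring
  rw [e34]
  have hcast2 : ξ₂ + 1 + (n : ℂ) = ξ₂ + ((n + 1 : ℕ) : ℂ) := by push_cast; ring
  rw [hcast2]
  rw [hcdef]
  simp only []
  have hpoch1 : poch ξ₁ (n + 1) = poch ξ₁ 1 * poch (ξ₁ + 1) n := (poch_one_mul ξ₁ n).symm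
  have hp2 : poch ξ₂ 1 = Complex.Gamma (ξ₂ + 1) / Complex.Gamma ξ₂ := by
    unfold poch; norm_num
  have hp3 : poch ξ₃ 1 = Complex.Gamma (ξ₃ + 1) / Complex.Gamma ξ₃ := by
    unfold poch; norm_num
  have hfacc : (((n + 1).factorial : ℕ) : ℂ) = ((n : ℂ) + 1) * ((n.factorial : ℕ) : ℂ) := by
    rw [Nat.factorial_succ]; push_cast; ring
  have hncast : ((n + 1 : ℕ) : ℂ) = (n : ℂ) + 1 := by push_cast; ring
  rw [hpoch1, hp2, hp3, hfacc, hncast, hb, hb']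
  have hn1 : ((n : ℂ) + 1) ≠ 0 := by
    have := Nat.cast_add_one_ne_zero (R := ℂ) n
    simpa using this
  have hfn : ((n.factorial : ℕ) : ℂ) ≠ 0 := Nat.cast_ne_zero.mpr n.factorial_ne_zero
  field_simp

lemma extF_iteratedDeriv_aux (η p q : ℂ) :
    ∀ k : ℕ, ∀ ξ₁ ξ₂ ξ₃ : ℂ, 0 < ξ₂.re → ξ₂.re < ξ₃.re → Complex.Gamma ξ₁ ≠ 0 →
    ∀ x : ℂ, ‖x‖ < 1 →
      iteratedDeriv k (fun x => extF η p q ξ₁ ξ₂ ξ₃ x) x =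
        (poch ξ₁ k * poch ξ₂ k / poch ξ₃ k) *
          extF η p q (ξ₁ + k) (ξ₂ + k) (ξ₃ + k) x := by
  intro k
  induction k with
  | zero =>
    intro ξ₁ ξ₂ ξ₃ h1 h2 hξ₁ x hx
    have hG2 : Complex.Gamma ξ₂ ≠ 0 := Complex.Gamma_ne_zero_of_re_pos h1
    have hG3 : Complex.Gamma ξ₃ ≠ 0 := Complex.Gamma_ne_zero_of_re_pos (lt_trans h1 h2)
    have hp : ∀ a : ℂ, Complex.Gamma a ≠ 0 → poch a 0 = 1 := by
      intro a ha
      unfold poch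
      rw [Nat.cast_zero, add_zero, div_self ha]
    rw [iteratedDeriv_zero, hp ξ₁ hξ₁, hp ξ₂ hG2, hp ξ₃ hG3]
    norm_num
  | succ k ih =>
    intro ξ₁ ξ₂ ξ₃ h1 h2 hξ₁ x hx
    rw [iteratedDeriv_succ']
    have hball : Metric.ball (0:ℂ) 1 ∈ nhds x := by
      apply Metric.isOpen_ball.mem_nhds
      rw [mem_ball_zero_iff]
      exact hx
    have heq : deriv (fun y => extF η p q ξ₁ ξ₂ ξ₃ y) =ᶠ[nhds x]
        (fun y => (poch ξ₁ 1 * poch ξ₂ 1 / poch ξ₃ 1) *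
          extF η p q (ξ₁ + 1) (ξ₂ + 1) (ξ₃ + 1) y) := by
      filter_upwards [hball] with y hy
      exact extF_deriv η p q ξ₁ ξ₂ ξ₃ h1 h2 hξ₁ y (mem_ball_zero_iff.mp hy)
    rw [Filter.EventuallyEq.iteratedDeriv_eq k heq, iteratedDeriv_const_mul']
    rw [ih (ξ₁ + 1) (ξ₂ + 1) (ξ₃ + 1)
      (by rw [Complex.add_re, Complex.one_re]; linarith)
      (by rw [Complex.add_re, Complex.add_re, Complex.one_re]; linarith)
      (gamma_succ_ne hξ₁) x hx]
    have e1 : ξ₁ + 1 + (k : ℂ) = ξ₁ + ((k + 1 : ℕ) : ℂ) := by push_cast; ring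
    have e2 : ξ₂ + 1 + (k : ℂ) = ξ₂ + ((k + 1 : ℕ) : ℂ) := by push_cast; ring
    have e3 : ξ₃ + 1 + (k : ℂ) = ξ₃ + ((k + 1 : ℕ) : ℂ) := by push_cast; ring
    rw [e1, e2, e3, ← poch_one_mul ξ₁ k, ← poch_one_mul ξ₂ k, ← poch_one_mul ξ₃ k]
    ring

theorem extF_iteratedDeriv (k : ℕ) (ξ₁ ξ₂ ξ₃ p q η : ℂ)
    (h1 : 0 < ξ₂.re) (h2 : ξ₂.re < ξ₃.re) (hp : 0 < p.re) (hq : 0 < q.re)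
    (hη : -1 < η.re) :
    ∀ x : ℂ, ‖x‖ < 1 →
      iteratedDeriv k (fun x => extF η p q ξ₁ ξ₂ ξ₃ x) x =
        (poch ξ₁ k * poch ξ₂ k / poch ξ₃ k) *
          extF η p q (ξ₁ + k) (ξ₂ + k) (ξ₃ + k) x := by
  intro x hx
  by_cases hξ₁ : Complex.Gamma ξ₁ = 0
  · have hzero : (fun x => extF η p q ξ₁ ξ₂ ξ₃ x) = fun y => (0:ℂ) * (1:ℂ) := by
      funext y
      rw [extF_eq_zero hξ₁, zero_mul]
    rw [hzero, iteratedDeriv_const_mul' k 0 (fun _ => (1:ℂ)) x]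
    simp [poch, hξ₁]
  · exact extF_iteratedDeriv_aux η p q k ξ₁ ξ₂ ξ₃ h1 h2 hξ₁ x hx
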